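/- Let w̃ be an affine permutation of size n whose window values are increasing: w̃(1) < w̃(2) < ... < w̃(n). Then Σ_{i=1}^{n-1} ⌊(w̃(n) - w̃(i))/n⌋ = w̃(n) - n. -/

import Mathlib

private lemma ish_shift (f : Equiv.Perm ℤ) (n : ℤ)
    (h1 : ∀ k : ℤ, f (k + n) = f k + n) :
    ∀ k m : ℤ, f (k + n * m) = f k + n * m := by
  intro k m
  induction m using Int.induction_on with
  | zero => simp
  | succ i ih =>
      have harg : k + n * ((i : ℤ) + 1) = (k + n * i) + n := by ring
      rw [harg, h1, ih]; ring
  | pred i ih =>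
      have harg : k + n * (-(i : ℤ) - 1) + n = k + n * (-(i : ℤ)) := by ring
      have := h1 (k + n * (-(i : ℤ) - 1))
      rw [harg, ih] at this
      linarith

private lemma ish_sum_Icc_split (a b : ℤ) (hab : a ≤ b) (f : ℤ → ℤ) :
    ∑ i ∈ Finset.Icc a b, f i = (∑ i ∈ Finset.Icc a (b - 1), f i) + f b := by
  have hins : Finset.Icc a b = insert b (Finset.Icc a (b - 1)) := by
    ext x; simp only [Finset.mem_Icc, Finset.mem_insert]; omega
  rw [hins, Finset.sum_insert (by simp only [Finset.mem_Icc]; omega)]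
  exact add_comm _ _

private lemma ish_gauss : ∀ N : ℕ, (∑ i ∈ Finset.Icc (1 : ℤ) (N : ℤ), i) * 2 = N * (N + 1) := by
  intro N
  induction N with
  | zero => simp
  | succ N ih =>
      push_cast
      rw [ish_sum_Icc_split 1 ((N : ℤ) + 1) (by linarith [Int.ofNat_nonneg N]) (fun i => i)]
      have hN : ((N : ℤ) + 1) - 1 = (N : ℤ) := by ring
      rw [hN]
      ring_nf
      ring_nf at ih
      linarith

/-- For an affine permutation with increasing window values,
`Σ_{i=1}^{n-1} ⌊(w̃(n) - w̃(i))/n⌋ = w̃(n) - n`. -/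
theorem ish_formula (n : ℕ) (hn : 1 ≤ n) (f : Equiv.Perm ℤ)
    (h1 : ∀ k : ℤ, f (k + n) = f k + n)
    (h2 : ∑ i ∈ Finset.Icc (1 : ℤ) (n : ℤ), f i = n * (n + 1) / 2)
    (hinc : ∀ i j : ℤ, 1 ≤ i → i < j → j ≤ n → f i < f j) :
    ∑ i ∈ Finset.Icc (1 : ℤ) ((n : ℤ) - 1), Int.fdiv (f (n : ℤ) - f i) (n : ℤ)
      = f (n : ℤ) - n := by
  have hn0 : (0 : ℤ) < n := by exact_mod_cast hn
  set s := Finset.Icc (1 : ℤ) ((n : ℤ) - 1) with hs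
  -- key: values in window are distinct mod n
  have key : ∀ i j : ℤ, 1 ≤ i → i ≤ n → 1 ≤ j → j ≤ n → (n : ℤ) ∣ f j - f i → i = j := by
    intro i j hi1 hin hj1 hjn ⟨m, hm⟩
    have hfj : f j = f (i + n * m) := by
      rw [ish_shift f n h1 i m]; linarith
    have hij : j = i + n * m := f.injective hfj
    have hdvd : (n : ℤ) ∣ j - i := ⟨m, by linarith⟩
    have habs : |j - i| < n := by
      rw [abs_lt]; constructor <;> linarith
    have : j - i = 0 := Int.eq_zero_of_abs_lt_dvd hdvd habs
    linarith
  -- the residue map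
  set g : ℤ → ℤ := fun i => (f (n : ℤ) - f i) % (n : ℤ) with hg
  have hmaps : ∀ i ∈ s, g i ∈ s := by
    intro i hi
    simp only [hs, Finset.mem_Icc] at hi ⊢
    have h0 : 0 ≤ g i := Int.emod_nonneg _ hn0.ne'
    have hlt : g i < n := Int.emod_lt_of_pos _ hn0
    have hne : g i ≠ 0 := by
      intro h0'
      have hdvd : (n : ℤ) ∣ f (n : ℤ) - f i := Int.dvd_of_emod_eq_zero h0'
      have := key i n hi.1 (by linarith [hi.2]) (by exact_mod_cast hn0) le_rfl hdvd
      linarith [hi.2]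
    omega
  have hinj : ∀ i ∈ s, ∀ j ∈ s, g i = g j → i = j := by
    intro i hi j hj hgij
    simp only [hs, Finset.mem_Icc] at hi hj
    have hmod : Int.ModEq (n : ℤ) (f (n : ℤ) - f i) (f (n : ℤ) - f j) := hgij
    have hd : (n : ℤ) ∣ f i - f j := by
      have h := hmod.dvd
      have heq : (f (n : ℤ) - f j) - (f (n : ℤ) - f i) = f i - f j := by ring
      rwa [heq] at h
    have hdvd : (n : ℤ) ∣ f j - f i := by
      have heq : f j - f i = -(f i - f j) := by ring
      rw [heq]; exact dvd_neg.mpr hd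
    exact key i j hi.1 (by linarith [hi.2]) hj.1 (by linarith [hj.2]) hdvd
  have himg : s.image g = s := by
    apply Finset.eq_of_subset_of_card_le
    · intro x hx
      rcases Finset.mem_image.mp hx with ⟨i, hi, rfl⟩
      exact hmaps i hi
    · rw [Finset.card_image_of_injOn hinj]
  have hsum_res : ∑ i ∈ s, g i = ∑ r ∈ s, r := by
    conv_rhs => rw [← himg]
    rw [Finset.sum_image hinj]
  -- split off top term of window sum
  have hsplit : ∑ i ∈ Finset.Icc (1 : ℤ) (n : ℤ), f i = (∑ i ∈ s, f i) + f (n : ℤ) :=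
    ish_sum_Icc_split 1 n (by exact_mod_cast hn) (fun i => f i)
  -- Gauss sums
  have hT2 : (∑ i ∈ Finset.Icc (1 : ℤ) (n : ℤ), i) * 2 = n * (n + 1) := ish_gauss n
  have hG : (∑ i ∈ Finset.Icc (1 : ℤ) (n : ℤ), i) = (∑ r ∈ s, r) + n :=
    ish_sum_Icc_split 1 n (by exact_mod_cast hn) (fun i => i)
  have hS : ∑ i ∈ Finset.Icc (1 : ℤ) (n : ℤ), f i = ∑ i ∈ Finset.Icc (1 : ℤ) (n : ℤ), i := by
    rw [h2, ← hT2, Int.mul_ediv_cancel _ two_ne_zero]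
  have hr2 : (∑ r ∈ s, r) * 2 = (n : ℤ) ^ 2 - n := by
    have hsq : (n : ℤ) * (n + 1) = (n : ℤ) ^ 2 + n := by ring
    linarith [hT2, hG]
  -- card of s
  have hcard : (s.card : ℤ) = (n : ℤ) - 1 := by
    rw [hs, Int.card_Icc]
    have h : ((n : ℤ) - 1 + 1 - 1) = (n : ℤ) - 1 := by ring
    rw [h, Int.toNat_of_nonneg (by linarith)]
  -- fdiv = ediv for positive divisor
  have hfd : ∀ i : ℤ, Int.fdiv (f (n : ℤ) - f i) (n : ℤ) = (f (n : ℤ) - f i) / (n : ℤ) := by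
    intro i; exact Int.fdiv_eq_ediv_of_nonneg _ hn0.le
  -- main computation: multiply by n
  have hmul : (n : ℤ) * (∑ i ∈ s, Int.fdiv (f (n : ℤ) - f i) (n : ℤ)) = (n : ℤ) * (f (n : ℤ) - n) := by
    rw [Finset.mul_sum]
    have hterm : ∀ i ∈ s, (n : ℤ) * Int.fdiv (f (n : ℤ) - f i) (n : ℤ)
        = (f (n : ℤ) - f i) - g i := by
      intro i _
      rw [hfd i]
      have := Int.mul_ediv_add_emod (f (n : ℤ) - f i) (n : ℤ)
      simp only [hg]
      linarith
    rw [Finset.sum_congr rfl hterm, Finset.sum_sub_distrib, hsum_res, Finset.sum_sub_distrib,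
      Finset.sum_const, nsmul_eq_mul]
    have h1' : (∑ i ∈ s, f i) = (∑ i ∈ Finset.Icc (1 : ℤ) (n : ℤ), i) - f (n : ℤ) := by
      rw [← hS]; linarith [hsplit]
    rw [h1', hG, hcard]
    linarith [hr2]
  exact mul_left_cancel₀ hn0.ne' hmul
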